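/- For a fixed path $(X_s)_{0\le s\le \Delta}$ with bounded measurable $\lambda \ge 0$, and any constants $c\in\mathbb{R}$, $\eta>0$, the Poisson estimator $E = \exp(c+\eta)\big[\mathbb{I}_{\{\kappa=0\}} + \mathbb{I}_{\{\kappa>0\}}\prod_{i=1}^{\kappa}\tfrac{-\Delta\lambda(X_{\tau_i}) - c}{\eta}\big]$, where $\kappa\sim\mathcal{P}o(\eta)$ and $\tau_1,\dots,\tau_\kappa$ are i.i.d. uniform on $(0,\Delta)$ independent of $\kappa$, satisfies $\mathbb{E}[E] = \exp(-\int_0^\Delta \lambda(X_s)\,ds)$. -/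

import Mathlib

open MeasureTheory ProbabilityTheory Real
open scoped NNReal ENNReal

lemma aux_iIndepFun_congr {Ω ι : Type*} [MeasurableSpace Ω] {μ : Measure Ω}
    {β : ι → Type*} {mβ : ∀ i, MeasurableSpace (β i)} {f g : ∀ i, Ω → β i}
    (hfg : ∀ i, f i =ᵐ[μ] g i) (hf : iIndepFun f μ) : iIndepFun g μ := by
  rw [iIndepFun_iff_measure_inter_preimage_eq_mul] at hf ⊢
  intro S sets hsets
  have hae : ∀ᵐ ω ∂μ, ∀ i ∈ S, f i ω = g i ω := by
    rw [Filter.eventually_all_finset]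
    exact fun i _ => hfg i
  have h1 : μ (⋂ i ∈ S, g i ⁻¹' sets i) = μ (⋂ i ∈ S, f i ⁻¹' sets i) := by
    apply measure_congr
    filter_upwards [hae] with ω hω
    show (ω ∈ ⋂ i ∈ S, g i ⁻¹' sets i) = (ω ∈ ⋂ i ∈ S, f i ⁻¹' sets i)
    simp only [Set.mem_iInter, Set.mem_preimage, eq_iff_iff]
    exact ⟨fun h i hi => (hω i hi) ▸ h i hi, fun h i hi => (hω i hi).symm ▸ h i hi⟩
  rw [h1, hf S hsets]
  refine Finset.prod_congr rfl fun i hi => ?_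
  apply measure_congr
  filter_upwards [hfg i] with ω hω
  show (ω ∈ f i ⁻¹' sets i) = (ω ∈ g i ⁻¹' sets i)
  simp only [Set.mem_preimage, eq_iff_iff, hω]

lemma aux_integral_finset_prod {Ω ι : Type*} [MeasurableSpace Ω] {μ : Measure Ω}
    [IsProbabilityMeasure μ] {f : ι → Ω → ℝ} (hmeas : ∀ i, Measurable (f i))
    (hind : iIndepFun f μ) (s : Finset ι) :
    ∫ ω, ∏ j ∈ s, f j ω ∂μ = ∏ j ∈ s, ∫ ω, f j ω ∂μ := by
  induction s using Finset.cons_induction with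
  | empty => simp
  | cons i s hi ih =>
    rw [Finset.prod_cons, ← ih]
    have hIndep : IndepFun (f i) (∏ j ∈ s, f j) μ :=
      (hind.indepFun_finsetProd_of_notMem hmeas hi).symm
    have hprodmeas : Measurable (∏ j ∈ s, f j) := by
      rw [Finset.prod_fn]
      exact Finset.measurable_prod s fun j _ => hmeas j
    have := hIndep.integral_mul_eq_mul_integral (hmeas i).aestronglyMeasurable hprodmeas.aestronglyMeasurable
    calc ∫ ω, ∏ j ∈ Finset.cons i s hi, f j ω ∂μ
        = ∫ ω, (f i * ∏ j ∈ s, f j) ω ∂μ := by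
          apply integral_congr_ae (Filter.Eventually.of_forall fun ω => ?_)
          simp [Finset.prod_cons]
      _ = (∫ ω, f i ω ∂μ) * ∫ ω, (∏ j ∈ s, f j) ω ∂μ := this
      _ = (∫ ω, f i ω ∂μ) * ∫ ω, ∏ j ∈ s, f j ω ∂μ := by
          congr 1
          apply integral_congr_ae (Filter.Eventually.of_forall fun ω => ?_)
          simp

/-- Index type for the joint independence of the Poisson variable `κ` (`none`)
and the uniform times `τ i` (`some i`). -/
def PoissonEstIndex : Option ℕ → Type
  | none => ℕ
  | some _ => ℝ

instance (j : Option ℕ) : MeasurableSpace (PoissonEstIndex j) := by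
  cases j with
  | none => exact (inferInstance : MeasurableSpace ℕ)
  | some _ => exact (inferInstance : MeasurableSpace ℝ)

/-- Unbiasedness of the Poisson estimator for a fixed path: with bounded
measurable `λ ≥ 0`, constants `c ∈ ℝ`, `η > 0`, `κ ~ Po(η)`, and `τ i` i.i.d.
uniform on `(0, Δ)` independent of `κ`,
`E[exp(c+η)(𝕀_{κ=0} + 𝕀_{κ>0} ∏_{i≤κ} (-Δλ(X_{τ_i}) - c)/η)] = exp(-∫₀^Δ λ(X_s) ds)`. -/
theorem poisson_estimator_unbiased
    {Ω : Type*} [MeasurableSpace Ω] (μ : Measure Ω) [IsProbabilityMeasure μ]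
    (Δ η c : ℝ) (hΔ : 0 < Δ) (hη : 0 < η)
    (lam : ℝ → ℝ) (hlam_meas : Measurable lam) (hlam_nonneg : ∀ x, 0 ≤ lam x)
    (Cb : ℝ) (hlam_bdd : ∀ x, lam x ≤ Cb)
    (Xpath : ℝ → ℝ) (hXpath : Measurable Xpath)
    (κ : Ω → ℕ) (τ : ℕ → Ω → ℝ)
    (hκ : Measure.map κ μ = (poissonPMF (Real.toNNReal η)).toMeasure)
    (hτ : ∀ i, pdf.IsUniform (τ i) (Set.Ioo (0:ℝ) Δ) μ)
    (h_indep : iIndepFun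
      (fun j : Option ℕ =>
        Option.rec (motive := fun j => Ω → PoissonEstIndex j) κ (fun i => τ i) j) μ)
    (E : Ω → ℝ)
    (hE : ∀ ω, E ω = Real.exp (c + η) *
      (if κ ω = 0 then 1 else
        ∏ i ∈ Finset.range (κ ω), ((-(Δ * lam (Xpath (τ i ω))) - c) / η))) :
    ∫ ω, E ω ∂μ = Real.exp (-(∫ s in (0:ℝ)..Δ, lam (Xpath s))) := by
  have hCb0 : 0 ≤ Cb := le_trans (hlam_nonneg 0) (hlam_bdd 0)
  set g : ℝ → ℝ := fun t => lam (Xpath t) with hgdef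
  have hgmeas : Measurable g := hlam_meas.comp hXpath
  set h : ℝ → ℝ := fun t => (-(Δ * g t) - c) / η with hhdef
  have hhmeas : Measurable h := (((hgmeas.const_mul Δ).neg.sub measurable_const).div_const η)
  set M : ℝ := (Δ * Cb + |c|) / η with hMdef
  have hM0 : 0 ≤ M := div_nonneg (by positivity) hη.le
  have hhbdd : ∀ t, |h t| ≤ M := by
    intro t
    rw [hhdef, hMdef]
    simp only
    rw [abs_div, abs_of_pos hη]
    have hnum : |(-(Δ * g t)) - c| ≤ Δ * Cb + |c| := by
      have e : |(-(Δ * g t)) - c| = |Δ * g t + c| := by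
        rw [← abs_neg]; ring_nf
      rw [e]
      refine (abs_add_le _ _).trans (add_le_add ?_ le_rfl)
      rw [abs_of_nonneg (mul_nonneg hΔ.le (hlam_nonneg _))]
      exact mul_le_mul_of_nonneg_left (hlam_bdd _) hΔ.le
    exact div_le_div_of_nonneg_right hnum hη.le
  -- volume facts
  have hvol : volume (Set.Ioo (0:ℝ) Δ) = ENNReal.ofReal Δ := by
    rw [Real.volume_Ioo, sub_zero]
  have hvne0 : volume (Set.Ioo (0:ℝ) Δ) ≠ 0 := by
    rw [hvol]; simpa using hΔ
  have hvnetop : volume (Set.Ioo (0:ℝ) Δ) ≠ ∞ := by rw [hvol]; exact ENNReal.ofReal_ne_top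
  -- measurable modifications
  have hτae : ∀ i, AEMeasurable (τ i) μ := fun i => (hτ i).aemeasurable hvne0 hvnetop
  have hκae : AEMeasurable κ μ := by
    by_contra hc
    rw [Measure.map_of_not_aemeasurable hc] at hκ
    have h0 : (0 : Measure ℕ) Set.univ = ((poissonPMF (Real.toNNReal η)).toMeasure) Set.univ := by
      rw [hκ]
    have h1 : ((poissonPMF (Real.toNNReal η)).toMeasure) Set.univ = 1 := measure_univ
    rw [h1] at h0
    simp at h0
  set κ' : Ω → ℕ := hκae.mk κ with hκ'def
  have hκ'meas : Measurable κ' := hκae.measurable_mk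
  have hκκ' : κ =ᵐ[μ] κ' := hκae.ae_eq_mk
  set τ' : ℕ → Ω → ℝ := fun i => (hτae i).mk (τ i) with hτ'def
  have hτ'meas : ∀ i, Measurable (τ' i) := fun i => (hτae i).measurable_mk
  have hττ' : ∀ i, τ i =ᵐ[μ] τ' i := fun i => (hτae i).ae_eq_mk
  -- independence of modified family
  set Z' : ∀ j : Option ℕ, Ω → PoissonEstIndex j :=
    fun j => Option.rec (motive := fun j => Ω → PoissonEstIndex j) κ' (fun i => τ' i) j with hZ'def
  have h_indep' : iIndepFun Z' μ := by
    apply aux_iIndepFun_congr ?_ h_indep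
    intro j
    cases j with
    | none => exact hκκ'
    | some i => exact hττ' i
  -- integral of h ∘ τ' i
  set I₀ : ℝ := ∫ s in (0:ℝ)..Δ, lam (Xpath s) with hI₀def
  set m : ℝ := (-I₀ - c) / η with hmdef
  have hgint : IntegrableOn g (Set.Ioo (0:ℝ) Δ) volume := by
    apply Integrable.mono' (integrable_const Cb) (hgmeas.aestronglyMeasurable.restrict)
    apply Filter.Eventually.of_forall
    intro t
    rw [Real.norm_eq_abs, abs_of_nonneg (hlam_nonneg _)]
    exact hlam_bdd _
  have hIoo : ∫ t in Set.Ioo (0:ℝ) Δ, g t = I₀ := by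
    rw [hI₀def, intervalIntegral.integral_of_le hΔ.le, MeasureTheory.integral_Ioc_eq_integral_Ioo]
  have hτint : ∀ i, ∫ ω, h (τ' i ω) ∂μ = m := by
    intro i
    have e1 : ∫ ω, h (τ' i ω) ∂μ = ∫ y, h y ∂(Measure.map (τ' i) μ) :=
      (integral_map (hτ'meas i).aemeasurable hhmeas.aestronglyMeasurable).symm
    have e2 : Measure.map (τ' i) μ = Measure.map (τ i) μ :=
      (Measure.map_congr (hττ' i)).symm
    have e3 : Measure.map (τ i) μ
        = (volume (Set.Ioo (0:ℝ) Δ))⁻¹ • volume.restrict (Set.Ioo (0:ℝ) Δ) := hτ i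
    rw [e1, e2, e3, integral_smul_measure, hvol]
    have e4 : ∫ y in Set.Ioo (0:ℝ) Δ, h y = (-(Δ * I₀) - c * Δ) / η := by
      calc ∫ y in Set.Ioo (0:ℝ) Δ, h y
          = (∫ y in Set.Ioo (0:ℝ) Δ, (-(Δ * g y) - c)) / η := by
            rw [hhdef, integral_div]
        _ = (-(Δ * I₀) - c * Δ) / η := by
            have hint1 : IntegrableOn (fun y => -(Δ * g y)) (Set.Ioo (0:ℝ) Δ) volume :=
              (hgint.const_mul Δ).neg
            have hint2 : IntegrableOn (fun _ : ℝ => c) (Set.Ioo (0:ℝ) Δ) volume :=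
              integrableOn_const (by rw [hvol]; exact ENNReal.ofReal_ne_top)
            have e5 : ∫ y in Set.Ioo (0:ℝ) Δ, (-(Δ * g y) - c)
                = (∫ y in Set.Ioo (0:ℝ) Δ, -(Δ * g y)) - ∫ _ in Set.Ioo (0:ℝ) Δ, c :=
              integral_sub hint1 hint2
            rw [e5, integral_neg, integral_const_mul, hIoo, setIntegral_const, smul_eq_mul, measureReal_def,
              hvol, ENNReal.toReal_ofReal hΔ.le]
            ring_nf
    rw [e4, hmdef]
    rw [ENNReal.toReal_inv, ENNReal.toReal_ofReal hΔ.le, smul_eq_mul]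
    field_simp
  -- Poisson probabilities
  have hPk : ∀ k : ℕ, (μ (κ' ⁻¹' {k})).toReal = Real.exp (-η) * η ^ k / (k.factorial : ℝ) := by
    intro k
    have e1 : μ (κ' ⁻¹' {k}) = μ (κ ⁻¹' {k}) := by
      apply measure_congr
      filter_upwards [hκκ'] with ω hω
      show (ω ∈ κ' ⁻¹' {k}) = (ω ∈ κ ⁻¹' {k})
      simp only [Set.mem_preimage, Set.mem_singleton_iff, eq_iff_iff, hω]
    have e2 : μ (κ ⁻¹' {k}) = (Measure.map κ μ) {k} :=
      (Measure.map_apply_of_aemeasurable hκae (measurableSet_singleton k)).symm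
    rw [e1, e2, hκ, PMF.toMeasure_apply_singleton _ _ (measurableSet_singleton k)]
    have e3 : poissonPMF (Real.toNNReal η) k
        = ENNReal.ofReal (poissonPMFReal (Real.toNNReal η) k) := rfl
    rw [e3, ENNReal.toReal_ofReal poissonPMFReal_nonneg]
    unfold poissonPMFReal
    rw [Real.coe_toNNReal η hη.le]
  -- the product family for fixed k
  set W : ℕ → Option ℕ → Ω → ℝ := fun k j =>
    Option.rec (motive := fun _ => Ω → ℝ)
      (fun ω => if κ' ω = k then (1:ℝ) else 0) (fun i ω => h (τ' i ω)) j with hWdef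
  have hWmeas : ∀ k j, Measurable (W k j) := by
    intro k j
    cases j with
    | none =>
      exact measurable_one.ite (hκ'meas (measurableSet_singleton k)) measurable_const
    | some i => exact hhmeas.comp (hτ'meas i)
  have hWindep : ∀ k, iIndepFun (W k) μ := by
    intro k
    set F0 : ℕ → ℝ := fun n => if n = k then (1:ℝ) else 0 with hF0def
    set G : ∀ j : Option ℕ, PoissonEstIndex j → ℝ := fun j =>
      Option.rec (motive := fun j => PoissonEstIndex j → ℝ)
        F0 (fun _ => h) j with hGdef
    have hGmeas : ∀ j, Measurable (G j) := by
      intro j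
      cases j with
      | none => exact measurable_from_top
      | some i => exact hhmeas
    have := h_indep'.comp G hGmeas
    have hWG : W k = fun j => G j ∘ Z' j := by
      funext j
      cases j with
      | none => rfl
      | some i => rfl
    rw [hWG]
    exact this
  -- the summands
  set f : ℕ → Ω → ℝ := fun k ω =>
    (if κ' ω = k then (1:ℝ) else 0) * ∏ i ∈ Finset.range k, h (τ' i ω) with hfdef
  have hfmeas : ∀ k, Measurable (f k) := by
    intro k
    exact (hWmeas k none).mul (Finset.measurable_prod _ fun i _ => hhmeas.comp (hτ'meas i))
  have hfbdd : ∀ k ω, ‖f k ω‖ ≤ M ^ k := by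
    intro k ω
    rw [hfdef]
    simp only [Real.norm_eq_abs, abs_mul]
    calc |if κ' ω = k then (1:ℝ) else 0| * |∏ i ∈ Finset.range k, h (τ' i ω)|
        ≤ 1 * |∏ i ∈ Finset.range k, h (τ' i ω)| := by
          apply mul_le_mul_of_nonneg_right _ (abs_nonneg _)
          split <;> simp
      _ = |∏ i ∈ Finset.range k, h (τ' i ω)| := one_mul _
      _ ≤ M ^ k := by
          rw [Finset.abs_prod]
          calc ∏ i ∈ Finset.range k, |h (τ' i ω)| ≤ ∏ _i ∈ Finset.range k, M :=
                Finset.prod_le_prod (fun i _ => abs_nonneg _) (fun i _ => hhbdd _)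
            _ = M ^ k := by rw [Finset.prod_const, Finset.card_range]
  have hfint : ∀ k, Integrable (f k) μ := by
    intro k
    exact Integrable.mono' (integrable_const (M ^ k)) (hfmeas k).aestronglyMeasurable
      (Filter.Eventually.of_forall fun ω => hfbdd k ω)
  -- indicator integral
  have hindmeas : ∀ k : ℕ, MeasurableSet (κ' ⁻¹' {k}) :=
    fun k => hκ'meas (measurableSet_singleton k)
  have hindint : ∀ k : ℕ, ∫ ω, (if κ' ω = k then (1:ℝ) else 0) ∂μ = (μ (κ' ⁻¹' {k})).toReal := by
    intro k
    have e : (fun ω => if κ' ω = k then (1:ℝ) else 0)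
        = Set.indicator (κ' ⁻¹' {k}) (1 : Ω → ℝ) := by
      funext ω
      by_cases hω : κ' ω = k <;> simp [Set.indicator, hω]
    rw [e, integral_indicator_one (hindmeas k)]
    rfl
  -- factorization of each summand
  have hfact : ∀ k, ∫ ω, f k ω ∂μ
      = (Real.exp (-η) * η ^ k / (k.factorial : ℝ)) * m ^ k := by
    intro k
    have hnone : none ∉ (Finset.range k).image some := by simp
    have e1 : ∀ ω, f k ω
        = ∏ j ∈ insert none ((Finset.range k).image some), W k j ω := by
      intro ω
      rw [Finset.prod_insert hnone, Finset.prod_image (by intro a _ b _ hab; simpa using hab)]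
    calc ∫ ω, f k ω ∂μ
        = ∫ ω, ∏ j ∈ insert none ((Finset.range k).image some), W k j ω ∂μ := by
          exact integral_congr_ae (Filter.Eventually.of_forall e1)
      _ = ∏ j ∈ insert none ((Finset.range k).image some), ∫ ω, W k j ω ∂μ :=
          aux_integral_finset_prod (hWmeas k) (hWindep k) _
      _ = (∫ ω, W k none ω ∂μ) * ∏ i ∈ Finset.range k, ∫ ω, W k (some i) ω ∂μ := by
          rw [Finset.prod_insert hnone,
            Finset.prod_image (by intro a _ b _ hab; simpa using hab)]
      _ = (Real.exp (-η) * η ^ k / (k.factorial : ℝ)) * m ^ k := by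
          have e2 : ∫ ω, W k none ω ∂μ = (Real.exp (-η) * η ^ k / (k.factorial : ℝ)) := by
            rw [show (fun ω => W k none ω) = fun ω => if κ' ω = k then (1:ℝ) else 0 from rfl,
              hindint k, hPk k]
          have e3 : ∀ i, ∫ ω, W k (some i) ω ∂μ = m := fun i => hτint i
          rw [e2]
          congr 1
          rw [Finset.prod_congr rfl fun i _ => e3 i, Finset.prod_const, Finset.card_range]
  -- pointwise tsum decomposition
  have hEae : ∀ᵐ ω ∂μ, E ω = Real.exp (c + η) * ∑' k, f k ω := by
    filter_upwards [hκκ', ae_all_iff.mpr hττ'] with ω hκω hτω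
    rw [hE ω]
    congr 1
    have e1 : (if κ ω = 0 then (1:ℝ) else
        ∏ i ∈ Finset.range (κ ω), ((-(Δ * lam (Xpath (τ i ω))) - c) / η))
        = ∏ i ∈ Finset.range (κ' ω), h (τ' i ω) := by
      rw [← hκω]
      by_cases h0 : κ ω = 0
      · rw [if_pos h0, h0]; simp
      · rw [if_neg h0]
        exact Finset.prod_congr rfl fun i _ => by
          rw [hhdef]
          simp only [hgdef]
          rw [hτω i]
    rw [e1]
    have e2 : ∀ k, f k ω = if k = κ' ω then ∏ i ∈ Finset.range (κ' ω), h (τ' i ω) else 0 := by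
      intro k
      rw [hfdef]
      by_cases hk : κ' ω = k
      · subst hk; simp
      · simp [hk, Ne.symm hk]
    rw [tsum_congr e2, tsum_ite_eq]
  -- summability of norms
  have hnormle : ∀ k, ∫ ω, ‖f k ω‖ ∂μ
      ≤ (Real.exp (-η) * η ^ k / (k.factorial : ℝ)) * M ^ k := by
    intro k
    have hint2 : Integrable (fun ω => (if κ' ω = k then (1:ℝ) else 0) * M ^ k) μ :=
      ((integrable_const (1:ℝ)).indicator (hindmeas k)).congr
        (Filter.Eventually.of_forall fun ω => by
          by_cases hω : κ' ω = k <;> simp [Set.indicator, hω]) |>.mul_const _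
    have hle : ∀ ω, ‖f k ω‖ ≤ (if κ' ω = k then (1:ℝ) else 0) * M ^ k := by
      intro ω
      rw [hfdef]
      by_cases hω : κ' ω = k
      · simp only [hω, if_true, one_mul]
        have := hfbdd k ω
        rw [hfdef] at this
        simpa [hω] using this
      · simp [hω]
    calc ∫ ω, ‖f k ω‖ ∂μ ≤ ∫ ω, (if κ' ω = k then (1:ℝ) else 0) * M ^ k ∂μ :=
          integral_mono (hfint k).norm hint2 hle
      _ = (Real.exp (-η) * η ^ k / (k.factorial : ℝ)) * M ^ k := by
          rw [integral_mul_const, hindint k, hPk k]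
  have hsummaux : Summable (fun k : ℕ => (Real.exp (-η) * η ^ k / (k.factorial : ℝ)) * M ^ k) := by
    have : ∀ k : ℕ, (Real.exp (-η) * η ^ k / (k.factorial : ℝ)) * M ^ k
        = Real.exp (-η) * ((η * M) ^ k / (k.factorial : ℝ)) := by
      intro k
      rw [mul_pow]
      ring
    rw [funext this]
    exact (Real.summable_pow_div_factorial (η * M)).mul_left _
  have hsum : Summable (fun k => ∫ ω, ‖f k ω‖ ∂μ) := by
    apply Summable.of_nonneg_of_le (fun k => integral_nonneg fun ω => norm_nonneg _)
      (fun k => hnormle k) hsummaux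
  -- putting it together
  have key : ∫ ω, E ω ∂μ = Real.exp (c + η) * ∑' k, ∫ ω, f k ω ∂μ := by
    calc ∫ ω, E ω ∂μ = ∫ ω, Real.exp (c + η) * ∑' k, f k ω ∂μ := integral_congr_ae hEae
      _ = Real.exp (c + η) * ∫ ω, ∑' k, f k ω ∂μ := integral_const_mul _ _
      _ = Real.exp (c + η) * ∑' k, ∫ ω, f k ω ∂μ := by
          rw [integral_tsum_of_summable_integral_norm hfint hsum]
  rw [key]
  have hterm : ∀ k : ℕ, ∫ ω, f k ω ∂μ
      = Real.exp (-η) * ((-I₀ - c) ^ k / (k.factorial : ℝ)) := by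
    intro k
    rw [hfact k, hmdef, div_pow]
    have hηk : (η : ℝ) ^ k ≠ 0 := pow_ne_zero k hη.ne'
    field_simp
  rw [tsum_congr hterm, tsum_mul_left]
  have hexp : ∑' k : ℕ, ((-I₀ - c) ^ k / (k.factorial : ℝ)) = Real.exp (-I₀ - c) := by
    rw [Real.exp_eq_exp_ℝ, NormedSpace.exp_eq_tsum_div]
  rw [hexp, ← Real.exp_add, ← Real.exp_add]
  congr 1
  ring
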